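/- Let Ω be a finite set and p, q probability mass functions on Ω with p(ω) + q(ω) > 0 for all ω ∈ Ω. Then the infimum over all functions D : Ω → (0,1) of the discriminator loss L(D) = Σ_ω p(ω)(−log D(ω)) + Σ_ω q(ω)(−log(1−D(ω))) equals log 4 − 2·JSD(p‖q), and it is attained by D*(ω) = p(ω)/(p(ω)+q(ω)) (with the convention that the value of D at points where p(ω) = 0 or q(ω) = 0 is interpreted as the corresponding limit, the infimum being taken over (0,1)-valued functions). -/

import Mathlib

/-- Kullback–Leibler divergence between pmfs on a finite set (with `0 · log 0 = 0`,
using Mathlib's conventions `Real.log 0 = 0` and `x / 0 = 0`). -/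
noncomputable def KLdiv {Ω : Type*} [Fintype Ω] (p q : Ω → ℝ) : ℝ :=
  ∑ ω, p ω * Real.log (p ω / q ω)

/-- Jensen–Shannon divergence: `JSD(p‖q) = ½ KL(p‖m) + ½ KL(q‖m)` with `m = (p+q)/2`. -/
noncomputable def JSD {Ω : Type*} [Fintype Ω] (p q : Ω → ℝ) : ℝ :=
  KLdiv p (fun ω => (p ω + q ω) / 2) / 2 + KLdiv q (fun ω => (p ω + q ω) / 2) / 2

/-- The cross-entropy discriminator loss
`L(D) = ∑ ω p(ω)(−log D(ω)) + ∑ ω q(ω)(−log(1−D(ω)))`. -/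
noncomputable def discLoss {Ω : Type*} [Fintype Ω] (p q D : Ω → ℝ) : ℝ :=
  ∑ ω, p ω * (-Real.log (D ω)) + ∑ ω, q ω * (-Real.log (1 - D ω))

lemma ident_aux {Ω : Type*} [Fintype Ω]
    (p q : Ω → ℝ) (hp0 : ∀ ω, 0 ≤ p ω) (hp1 : ∑ ω, p ω = 1)
    (hq0 : ∀ ω, 0 ≤ q ω) (hq1 : ∑ ω, q ω = 1)
    (hpq : ∀ ω, 0 < p ω + q ω) :
    discLoss p q (fun ω => p ω / (p ω + q ω)) = Real.log 4 - 2 * JSD p q := by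
  have key : ∀ (r s : Ω → ℝ), (∀ ω, 0 ≤ r ω) → (∀ ω, 0 < r ω + s ω) →
      ∀ ω, r ω * Real.log (r ω / ((r ω + s ω)/2))
        = r ω * Real.log 2 + r ω * Real.log (r ω/(r ω + s ω)) := by
    intro r s hr hrs ω
    rcases eq_or_lt_of_le (hr ω) with h | h
    · simp [← h]
    · have hs := hrs ω
      have e : r ω / ((r ω + s ω)/2) = 2 * (r ω/(r ω + s ω)) := by field_simp
      rw [e, Real.log_mul (by norm_num) (by positivity)]
      ring
  have keyq : ∀ ω, q ω * Real.log (q ω / ((p ω + q ω)/2))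
      = q ω * Real.log 2 + q ω * Real.log (q ω/(p ω + q ω)) := by
    intro ω
    have := key q p hq0 (fun ω => by have := hpq ω; linarith) ω
    simpa [add_comm (q ω) (p ω)] using this
  have sump : KLdiv p (fun ω => (p ω + q ω)/2)
      = Real.log 2 + ∑ ω, p ω * Real.log (p ω/(p ω + q ω)) := by
    unfold KLdiv
    rw [Finset.sum_congr rfl (fun ω _ => key p q hp0 hpq ω), Finset.sum_add_distrib,
      ← Finset.sum_mul, hp1, one_mul]
  have sumq : KLdiv q (fun ω => (p ω + q ω)/2)
      = Real.log 2 + ∑ ω, q ω * Real.log (q ω/(p ω + q ω)) := by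
    unfold KLdiv
    rw [Finset.sum_congr rfl (fun ω _ => keyq ω), Finset.sum_add_distrib,
      ← Finset.sum_mul, hq1, one_mul]
  have hsub : ∀ ω, 1 - p ω / (p ω + q ω) = q ω / (p ω + q ω) := by
    intro ω
    have := hpq ω
    field_simp
    ring
  have hd : discLoss p q (fun ω => p ω / (p ω + q ω))
      = -∑ ω, p ω * Real.log (p ω/(p ω + q ω)) - ∑ ω, q ω * Real.log (q ω/(p ω + q ω)) := by
    unfold discLoss
    simp only [hsub]
    simp only [mul_neg, Finset.sum_neg_distrib]
    ring
  have h4 : Real.log 4 = 2 * Real.log 2 := by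
    rw [show (4:ℝ) = 2^2 by norm_num, Real.log_pow]
    push_cast; ring
  rw [hd, JSD, sump, sumq, h4]
  ring

lemma gibbs_point_aux (a b t : ℝ) (ha : 0 ≤ a) (hb : 0 ≤ b) (hs : 0 < a + b)
    (ht0 : 0 < t) (ht1 : t < 1) :
    a * Real.log t + b * Real.log (1 - t) ≤
    a * Real.log (a/(a+b)) + b * Real.log (b/(a+b)) := by
  rcases eq_or_lt_of_le ha with h | ha'
  · rw [← h]
    have hb' : 0 < b := by linarith
    have : b / (0 + b) = 1 := by field_simp; ring
    rw [this, Real.log_one]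
    have : Real.log (1 - t) ≤ 0 := Real.log_nonpos (by linarith) (by linarith)
    nlinarith
  rcases eq_or_lt_of_le hb with h | hb'
  · rw [← h]
    have : a / (a + 0) = 1 := by field_simp; ring
    rw [this, Real.log_one]
    have : Real.log t ≤ 0 := Real.log_nonpos (by linarith) (by linarith)
    nlinarith
  · have h1 : Real.log t - Real.log (a/(a+b)) = Real.log (t * (a+b) / a) := by
      rw [Real.log_div (by positivity) (ne_of_gt ha'), Real.log_mul (ne_of_gt ht0) (ne_of_gt hs),
        Real.log_div (ne_of_gt ha') (ne_of_gt hs)]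
      ring
    have h1t : (0:ℝ) < 1 - t := by linarith
    have h2 : Real.log (1-t) - Real.log (b/(a+b)) = Real.log ((1-t) * (a+b) / b) := by
      rw [Real.log_div (by positivity) (ne_of_gt hb'), Real.log_mul (ne_of_gt h1t) (ne_of_gt hs),
        Real.log_div (ne_of_gt hb') (ne_of_gt hs)]
      ring
    have l1 : Real.log (t * (a+b) / a) ≤ t * (a+b) / a - 1 :=
      Real.log_le_sub_one_of_pos (by positivity)
    have l2 : Real.log ((1-t) * (a+b) / b) ≤ (1-t) * (a+b) / b - 1 :=
      Real.log_le_sub_one_of_pos (by positivity)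
    have e1 : a * (t * (a+b) / a - 1) = t * (a+b) - a := by field_simp
    have e2 : b * ((1-t) * (a+b) / b - 1) = (1-t) * (a+b) - b := by field_simp
    nlinarith [mul_le_mul_of_nonneg_left l1 ha, mul_le_mul_of_nonneg_left l2 hb]

lemma gibbs_bound_aux {Ω : Type*} [Fintype Ω]
    (p q : Ω → ℝ) (hp0 : ∀ ω, 0 ≤ p ω) (hq0 : ∀ ω, 0 ≤ q ω)
    (hpq : ∀ ω, 0 < p ω + q ω) (D : Ω → ℝ) (hD : ∀ ω, D ω ∈ Set.Ioo (0:ℝ) 1) :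
    discLoss p q (fun ω => p ω / (p ω + q ω)) ≤ discLoss p q D := by
  have hsub : ∀ ω, 1 - p ω / (p ω + q ω) = q ω / (p ω + q ω) := by
    intro ω; have := hpq ω; field_simp; ring
  unfold discLoss
  simp only [hsub]
  rw [← Finset.sum_add_distrib, ← Finset.sum_add_distrib]
  apply Finset.sum_le_sum
  intro ω _
  have := gibbs_point_aux (p ω) (q ω) (D ω) (hp0 ω) (hq0 ω) (hpq ω) (hD ω).1 (hD ω).2
  simp only [mul_neg]
  linarith

lemma loss_tendsto_aux {Ω : Type*} [Fintype Ω]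
    (p q : Ω → ℝ) (hp0 : ∀ ω, 0 ≤ p ω) (hq0 : ∀ ω, 0 ≤ q ω)
    (hpq : ∀ ω, 0 < p ω + q ω) :
    Filter.Tendsto
      (fun ε : ℝ => discLoss p q (fun ω => (1-ε) * (p ω / (p ω + q ω)) + ε/2))
      (nhds 0) (nhds (discLoss p q (fun ω => p ω / (p ω + q ω)))) := by
  unfold discLoss
  apply Filter.Tendsto.add
  · apply tendsto_finset_sum
    intro ω _
    rcases eq_or_lt_of_le (hp0 ω) with h | h
    · simp only [← h, zero_mul]
      exact tendsto_const_nhds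
    · have ha : 0 < p ω / (p ω + q ω) := div_pos h (hpq ω)
      have hcont : ContinuousAt
          (fun ε : ℝ => p ω * (-Real.log ((1-ε) * (p ω / (p ω + q ω)) + ε/2))) 0 := by
        apply ContinuousAt.mul continuousAt_const
        apply ContinuousAt.neg
        apply ContinuousAt.comp (Real.continuousAt_log (by simpa using ne_of_gt ha))
        fun_prop
      simpa using hcont.tendsto
  · apply tendsto_finset_sum
    intro ω _
    rcases eq_or_lt_of_le (hq0 ω) with h | h
    · simp only [← h, zero_mul]
      exact tendsto_const_nhds
    · have ha : 0 < 1 - p ω / (p ω + q ω) := by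
        have hs := hpq ω
        have : p ω / (p ω + q ω) < 1 := by
          rw [div_lt_one hs]; linarith
        linarith
      have hcont : ContinuousAt
          (fun ε : ℝ => q ω * (-Real.log (1 - ((1-ε) * (p ω / (p ω + q ω)) + ε/2)))) 0 := by
        apply ContinuousAt.mul continuousAt_const
        apply ContinuousAt.neg
        apply ContinuousAt.comp (Real.continuousAt_log (by simpa using ne_of_gt ha))
        fun_prop
      simpa using hcont.tendsto

/-- for pmfs `p, q` on a finite set with `p + q > 0` pointwise, the infimum of
the discriminator loss over `(0,1)`-valued discriminators equals `log 4 − 2·JSD(p‖q)`, and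
it is attained by `D*(ω) = p(ω)/(p(ω)+q(ω))` (interpreted with the limit conventions
`Real.log 0 = 0`). -/
theorem stmt_11 {Ω : Type*} [Fintype Ω]
    (p q : Ω → ℝ) (hp0 : ∀ ω, 0 ≤ p ω) (hp1 : ∑ ω, p ω = 1)
    (hq0 : ∀ ω, 0 ≤ q ω) (hq1 : ∑ ω, q ω = 1)
    (hpq : ∀ ω, 0 < p ω + q ω) :
    sInf {v : ℝ | ∃ D : Ω → ℝ, (∀ ω, D ω ∈ Set.Ioo (0 : ℝ) 1) ∧ v = discLoss p q D}
        = Real.log 4 - 2 * JSD p q ∧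
    discLoss p q (fun ω => p ω / (p ω + q ω)) = Real.log 4 - 2 * JSD p q := by
  have hid := ident_aux p q hp0 hp1 hq0 hq1 hpq
  set L := discLoss p q (fun ω => p ω / (p ω + q ω)) with hL
  set S := {v : ℝ | ∃ D : Ω → ℝ, (∀ ω, D ω ∈ Set.Ioo (0 : ℝ) 1) ∧ v = discLoss p q D} with hS
  have hbdd : BddBelow S := by
    refine ⟨L, ?_⟩
    rintro v ⟨D, hD, rfl⟩
    exact gibbs_bound_aux p q hp0 hq0 hpq D hD
  have hne : S.Nonempty := by
    refine ⟨discLoss p q (fun _ => 1/2), fun _ => 1/2, fun ω => ⟨by norm_num, by norm_num⟩, rfl⟩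
  refine ⟨?_, hid⟩
  rw [← hid]
  apply le_antisymm
  · apply le_of_forall_pos_le_add
    intro η hη
    have ht := (loss_tendsto_aux p q hp0 hq0 hpq).mono_left
      (nhdsWithin_le_nhds (s := Set.Ioi (0:ℝ)))
    have hev : ∀ᶠ ε in nhdsWithin (0:ℝ) (Set.Ioi 0),
        discLoss p q (fun ω => (1-ε) * (p ω / (p ω + q ω)) + ε/2) < L + η :=
      ht.eventually_lt_const (by linarith)
    have hIoo : ∀ᶠ ε in nhdsWithin (0:ℝ) (Set.Ioi 0), ε ∈ Set.Ioo (0:ℝ) 1 :=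
      Ioo_mem_nhdsGT_of_mem ⟨le_refl 0, one_pos⟩
    obtain ⟨ε, h1, hε0, hε1⟩ := (hev.and hIoo).exists
    have hmem : discLoss p q (fun ω => (1-ε) * (p ω / (p ω + q ω)) + ε/2) ∈ S := by
      refine ⟨_, fun ω => ?_, rfl⟩
      have ha0 : 0 ≤ p ω / (p ω + q ω) := div_nonneg (hp0 ω) (le_of_lt (hpq ω))
      have ha1 : p ω / (p ω + q ω) ≤ 1 := by
        rw [div_le_one (hpq ω)]
        have := hq0 ω; linarith
      constructor
      · have : (0:ℝ) < ε/2 := by linarith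
        nlinarith
      · nlinarith
    calc sInf S ≤ _ := csInf_le hbdd hmem
      _ ≤ L + η := le_of_lt h1
  · exact le_csInf hne (by rintro v ⟨D, hD, rfl⟩; exact gibbs_bound_aux p q hp0 hq0 hpq D hD)
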